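/- For all points p, q, r in ℍ with q ≠ r and p ≠ q, one has sinh(Metric.infDist p (L(q,r))) · sinh(dist q r) = sinh(Metric.infDist r (L(p,q))) · sinh(dist p q). (This is the distance-only form of the hyperbolic law of sines used repeatedly in the paper's Lemmas 2, 3 and 6: the hyperbolic sine of the distance from a vertex to the opposite line, divided by the hyperbolic sine of the adjacent side through q, equals sin of the angle at q, and hence is the same for the two vertices p and r.) -/

import Mathlib

open scoped UpperHalfPlane MatrixGroups
open UpperHalfPlane Real Complex Metric

/-- The geodesic line through `q` and `r` in the hyperbolic plane: the set of points
metrically collinear with `q` and `r`. -/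
def geodLine (q r : ℍ) : Set ℍ :=
  {x | dist q x + dist x r = dist q r ∨ dist q r + dist r x = dist q x ∨
       dist x q + dist q r = dist x r}

noncomputable def proj (x : ℍ) : ℍ :=
  UpperHalfPlane.mk ⟨0, ‖(x : ℂ)‖⟩ (by
    simpa using (norm_pos_iff.mpr (UpperHalfPlane.ne_zero x)))

lemma proj_re (x : ℍ) : (proj x).re = 0 := rfl
lemma proj_im (x : ℍ) : (proj x).im = ‖(x : ℂ)‖ := rfl

lemma proj_im_sq (x : ℍ) : (proj x).im ^ 2 = x.re ^ 2 + x.im ^ 2 := by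
  rw [proj_im, Complex.sq_norm, Complex.normSq_apply, UpperHalfPlane.coe_re, UpperHalfPlane.coe_im]; ring

lemma cosh_dist_pyth (q x : ℍ) (hq : q.re = 0) :
    Real.cosh (dist q x) = Real.cosh (dist q (proj x)) * Real.cosh (dist x (proj x)) := by
  rw [cosh_dist', cosh_dist', cosh_dist', hq, proj_re]
  have h1 : (proj x).im ^ 2 = x.re ^ 2 + x.im ^ 2 := proj_im_sq x
  have h2 : (0:ℝ) < q.im := q.im_pos
  have h3 : (0:ℝ) < x.im := x.im_pos
  have h4 : (0:ℝ) < (proj x).im := (proj x).im_pos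
  field_simp
  linear_combination (q.im^2 - (proj x).im^2) * h1

lemma dist_proj_lt (q x : ℍ) (hq : q.re = 0) (hx : x.re ≠ 0) :
    dist q (proj x) < dist q x := by
  have hD : 0 < dist x (proj x) := by
    rw [dist_pos]
    intro h
    exact hx (by rw [h, proj_re])
  have hk : 1 < Real.cosh (dist x (proj x)) := Real.one_lt_cosh.2 (ne_of_gt hD)
  have hpyth := cosh_dist_pyth q x hq
  have hlt : Real.cosh (dist q (proj x)) < Real.cosh (dist q x) := by
    rw [hpyth]
    nlinarith [Real.one_le_cosh (dist q (proj x))]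
  rwa [Real.cosh_lt_cosh, _root_.abs_of_nonneg dist_nonneg, _root_.abs_of_nonneg dist_nonneg] at hlt

lemma cosh_dist_of_re_eq_zero (q r : ℍ) (hq : q.re = 0) (hr : r.re = 0) :
    Real.cosh (dist q r) = Real.cosh (Real.log q.im - Real.log r.im) := by
  rw [UpperHalfPlane.dist_of_re_eq (by rw [hq, hr]), Real.dist_eq, Real.cosh_abs]

/-- Key strictness: a point off the imaginary axis cannot be metrically "beyond r" on the
line through two axis points. -/
lemma no_beyond (q r x : ℍ) (hq : q.re = 0) (hr : r.re = 0) (hx : x.re ≠ 0)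
    (hqr : q ≠ r) : dist q x ≠ dist q r + dist r x := by
  intro h
  set k := Real.cosh (dist x (proj x)) with hk
  have hD : 0 < dist x (proj x) := by
    rw [dist_pos]; intro h'; exact hx (by rw [h', proj_re])
  have hk1 : 1 < k := Real.one_lt_cosh.2 (ne_of_gt hD)
  set α := Real.log q.im
  set β := Real.log r.im
  set μ := Real.log (proj x).im
  have hcq : Real.cosh (dist q x) = k * Real.cosh (α - μ) := by
    rw [cosh_dist_pyth q x hq, cosh_dist_of_re_eq_zero q (proj x) hq (proj_re x)]
    ring
  have hcr : Real.cosh (dist r x) = k * Real.cosh (β - μ) := by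
    rw [cosh_dist_pyth r x hr, cosh_dist_of_re_eq_zero r (proj x) hr (proj_re x)]
    ring
  have hcqr : Real.cosh (dist q r) = Real.cosh (α - β) := cosh_dist_of_re_eq_zero q r hq hr
  -- from h : dist q x - dist r x = dist q r
  have heq : Real.cosh (dist q x - dist r x) = Real.cosh (α - β) := by
    rw [show dist q x - dist r x = dist q r by linarith, hcqr]
  rw [Real.cosh_sub, hcq, hcr] at heq
  set Cα := Real.cosh (α - μ)
  set Cβ := Real.cosh (β - μ)
  set Sα := Real.sinh (α - μ)
  set Sβ := Real.sinh (β - μ)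
  set P := Real.sinh (dist q x) * Real.sinh (dist r x) with hP
  have hP2 : P ^ 2 = (k ^ 2 * Cα ^ 2 - 1) * (k ^ 2 * Cβ ^ 2 - 1) := by
    rw [hP, mul_pow, Real.sinh_sq, Real.sinh_sq, hcq, hcr]; ring
  have hexp : Real.cosh (α - β) = Cα * Cβ - Sα * Sβ := by
    rw [show α - β = (α - μ) - (β - μ) by ring, Real.cosh_sub]
  have hW : P = (k ^ 2 - 1) * Cα * Cβ + Sα * Sβ := by linear_combination -heq - hexp
  have hkey : P ^ 2 - ((k ^ 2 - 1) * Cα * Cβ + Sα * Sβ) ^ 2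
      = (k ^ 2 - 1) * (Sα * Cβ - Cα * Sβ) ^ 2 := by
    rw [hP2]
    have h1 : Sα ^ 2 = Cα ^ 2 - 1 := Real.sinh_sq _
    have h2 : Sβ ^ 2 = Cβ ^ 2 - 1 := Real.sinh_sq _
    linear_combination (-(Sβ^2) - (k^2-1)*Cβ^2) * h1 + (-(Cα^2-1) - (k^2-1)*Cα^2) * h2
  have hzero : (k ^ 2 - 1) * (Sα * Cβ - Cα * Sβ) ^ 2 = 0 := by
    rw [← hkey, hW]; ring
  have hαβ : α ≠ β := by
    intro hab
    apply hqr
    have him : q.im = r.im := by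
      rw [← Real.exp_log q.im_pos, show Real.log q.im = Real.log r.im from hab,
        Real.exp_log r.im_pos]
    apply UpperHalfPlane.ext_re_im
    · show q.re = r.re
      rw [hq, hr]
    · exact him
  have hsab : Sα * Cβ - Cα * Sβ ≠ 0 := by
    have hss : Sα * Cβ - Cα * Sβ = Real.sinh (α - β) := by
      rw [show α - β = (α - μ) - (β - μ) by ring, Real.sinh_sub]
    rw [hss]
    simp only [ne_eq, Real.sinh_eq_zero]
    exact fun hc => hαβ (by linarith)
  have : (k ^ 2 - 1) > 0 := by nlinarith
  have := mul_ne_zero (ne_of_gt this) (pow_ne_zero 2 hsab)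
  exact this hzero

lemma real_collinear (a b t : ℝ) :
    |a - t| + |t - b| = |a - b| ∨ |a - b| + |b - t| = |a - t| ∨ |t - a| + |a - b| = |t - b| := by
  rcases le_total t a with h1 | h1 <;> rcases le_total t b with h2 | h2 <;>
    rcases le_total a b with h3 | h3
  · right; right
    rw [_root_.abs_of_nonpos (by linarith), _root_.abs_of_nonpos (by linarith), _root_.abs_of_nonpos (by linarith)]
    ring
  · right; left
    rw [_root_.abs_of_nonneg (by linarith), _root_.abs_of_nonneg (by linarith), _root_.abs_of_nonneg (by linarith)]
    ring
  · left
    rw [_root_.abs_of_nonneg (by linarith), _root_.abs_of_nonneg (by linarith), _root_.abs_of_nonneg (by linarith)]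
    ring
  · left
    rw [_root_.abs_of_nonneg (by linarith), _root_.abs_of_nonneg (by linarith), _root_.abs_of_nonneg (by linarith)]
    ring
  · left
    rw [_root_.abs_of_nonpos (by linarith), _root_.abs_of_nonpos (by linarith), _root_.abs_of_nonpos (by linarith)]
    ring
  · left
    rw [_root_.abs_of_nonpos (by linarith), _root_.abs_of_nonpos (by linarith), _root_.abs_of_nonpos (by linarith)]
    ring
  · right; left
    rw [_root_.abs_of_nonpos (by linarith), _root_.abs_of_nonpos (by linarith), _root_.abs_of_nonpos (by linarith)]
    ring
  · right; right
    rw [_root_.abs_of_nonneg (by linarith), _root_.abs_of_nonneg (by linarith), _root_.abs_of_nonneg (by linarith)]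
    ring

lemma dist_of_re_eq_zero (q r : ℍ) (hq : q.re = 0) (hr : r.re = 0) :
    dist q r = |Real.log q.im - Real.log r.im| := by
  rw [UpperHalfPlane.dist_of_re_eq (by rw [hq, hr]), Real.dist_eq]

lemma geodLine_axis (q r : ℍ) (hq : q.re = 0) (hr : r.re = 0) (hqr : q ≠ r) :
    geodLine q r = {x : ℍ | x.re = 0} := by
  ext x
  simp only [geodLine, Set.mem_setOf_eq]
  constructor
  · intro hmem
    by_contra hx
    rcases hmem with h1 | h2 | h3
    · have hq1 := dist_proj_lt q x hq hx
      have hr1 := dist_proj_lt r x hr hx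
      have htri := dist_triangle q (proj x) r
      have e1 : dist x r = dist r x := dist_comm x r
      have e2 : dist (proj x) r = dist r (proj x) := dist_comm _ _
      linarith
    · exact no_beyond q r x hq hr hx hqr h2.symm
    · refine no_beyond r q x hr hq hx hqr.symm ?_
      have e1 : dist r x = dist x r := dist_comm r x
      have e2 : dist r q = dist q r := dist_comm r q
      have e3 : dist q x = dist x q := dist_comm q x
      linarith
  · intro hx
    have dqx : dist q x = |Real.log q.im - Real.log x.im| := dist_of_re_eq_zero q x hq hx
    have dxr : dist x r = |Real.log x.im - Real.log r.im| := dist_of_re_eq_zero x r hx hr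
    have dqr : dist q r = |Real.log q.im - Real.log r.im| := dist_of_re_eq_zero q r hq hr
    have drx : dist r x = |Real.log r.im - Real.log x.im| := dist_of_re_eq_zero r x hr hx
    have dxq : dist x q = |Real.log x.im - Real.log q.im| := dist_of_re_eq_zero x q hx hq
    rw [dqx, dxr, dqr, drx, dxq]
    exact real_collinear _ _ _

lemma cosh_dist_proj (p : ℍ) : Real.cosh (dist p (proj p)) = (proj p).im / p.im := by
  rw [cosh_dist', proj_re]
  have h := proj_im_sq p
  have h2 : (0:ℝ) < p.im := p.im_pos
  have h4 : (0:ℝ) < (proj p).im := (proj p).im_pos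
  field_simp
  linear_combination (-1) * h

lemma infDist_axis (p : ℍ) : Metric.infDist p {x : ℍ | x.re = 0} = dist p (proj p) := by
  have key : ∀ y : ℍ, y.re = 0 → dist p (proj p) ≤ dist p y := by
    intro y hyre
    have hc : Real.cosh (dist p (proj p)) ≤ Real.cosh (dist p y) := by
      rw [cosh_dist_proj, cosh_dist', hyre]
      rw [div_le_div_iff₀ (by positivity) (by positivity)]
      nlinarith [proj_im_sq p, p.im_pos, y.im_pos, (proj p).im_pos,
        mul_nonneg p.im_pos.le (sq_nonneg ((proj p).im - y.im))]
    rwa [Real.cosh_le_cosh, _root_.abs_of_nonneg dist_nonneg,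
      _root_.abs_of_nonneg dist_nonneg] at hc
  apply le_antisymm
  · exact Metric.infDist_le_dist_of_mem (proj_re p)
  · by_contra hlt
    push_neg at hlt
    obtain ⟨y, hy, hd⟩ := (Metric.infDist_lt_iff ⟨proj p, proj_re p⟩).1 hlt
    exact absurd hd (not_lt.2 (key y hy))

lemma sinh_infDist_axis (p : ℍ) :
    Real.sinh (Metric.infDist p {x : ℍ | x.re = 0}) = |p.re| / p.im := by
  rw [infDist_axis]
  have h2 : 0 ≤ Real.sinh (dist p (proj p)) := by
    rw [Real.sinh_nonneg_iff]; exact dist_nonneg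
  have h3 : (0:ℝ) ≤ |p.re| / p.im := by positivity
  have h1 : Real.sinh (dist p (proj p)) ^ 2 = (|p.re| / p.im) ^ 2 := by
    rw [Real.sinh_sq, cosh_dist_proj, div_pow, div_pow, _root_.sq_abs]
    have h := proj_im_sq p
    have hp : (0:ℝ) < p.im := p.im_pos
    field_simp
    linear_combination h
  rw [← Real.sqrt_sq h2, h1, Real.sqrt_sq h3]

lemma axis_main (p q r : ℍ) (hq : q.re = 0) (hr : r.re = 0) (hqr : q ≠ r) :
    (Real.sinh (Metric.infDist p (geodLine q r)) * Real.sinh (dist q r)) ^ 2 =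
    1 - Real.cosh (dist p q) ^ 2 - Real.cosh (dist p r) ^ 2 - Real.cosh (dist q r) ^ 2
      + 2 * Real.cosh (dist p q) * Real.cosh (dist p r) * Real.cosh (dist q r) := by
  rw [geodLine_axis q r hq hr hqr, mul_pow, sinh_infDist_axis, Real.sinh_sq,
    cosh_dist' p q, cosh_dist' p r, cosh_dist' q r, hq, hr]
  have hqim : (0:ℝ) < q.im := q.im_pos
  have hrim : (0:ℝ) < r.im := r.im_pos
  have hpim : (0:ℝ) < p.im := p.im_pos
  have him : q.im ≠ r.im := by
    intro h
    exact hqr (UpperHalfPlane.ext_re_im (by show q.re = r.re; rw [hq, hr]) h)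
  rw [div_pow, _root_.sq_abs]
  field_simp
  ring

noncomputable def normMat (a b c d : ℝ) (h : a * d - b * c = 1) : SL(2, ℝ) :=
  ⟨!![a, b; c, d], by rw [Matrix.det_fin_two_of]; exact h⟩

lemma re_smul_zero (a b c d : ℝ) (h : a * d - b * c = 1) (z : ℍ)
    (hnum : (a * z.re + b) * (c * z.re + d) + (a * z.im) * (c * z.im) = 0) :
    ((normMat a b c d h) • z).re = 0 := by
  rw [specialLinearGroup_apply, mk_re]
  have e : ∀ i j, algebraMap ℝ ℝ ((normMat a b c d h) i j) = !![a, b; c, d] i j := by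
    intro i j; rfl
  rw [e 0 0, e 0 1, e 1 0, e 1 1]
  have m00 : !![a, b; c, d] 0 0 = a := by simp
  have m01 : !![a, b; c, d] 0 1 = b := by simp
  have m10 : !![a, b; c, d] 1 0 = c := by simp
  have m11 : !![a, b; c, d] 1 1 = d := by simp
  rw [m00, m01, m10, m11]
  rw [Complex.div_re]
  have h1 : ((a : ℂ) * z + b).re = a * z.re + b := by
    simp [Complex.add_re, Complex.mul_re, UpperHalfPlane.coe_re, UpperHalfPlane.coe_im]
  have h2 : ((a : ℂ) * z + b).im = a * z.im := by
    simp [Complex.add_im, Complex.mul_im, UpperHalfPlane.coe_re, UpperHalfPlane.coe_im]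
  have h3 : ((c : ℂ) * z + d).re = c * z.re + d := by
    simp [Complex.add_re, Complex.mul_re, UpperHalfPlane.coe_re, UpperHalfPlane.coe_im]
  have h4 : ((c : ℂ) * z + d).im = c * z.im := by
    simp [Complex.add_im, Complex.mul_im, UpperHalfPlane.coe_re, UpperHalfPlane.coe_im]
  rw [h1, h2, h3, h4]
  rw [← add_div, div_eq_zero_iff]
  left
  linarith [hnum]

lemma exists_normalize (q r : ℍ) : ∃ g : SL(2, ℝ), (g • q).re = 0 ∧ (g • r).re = 0 := by
  by_cases hre : q.re = r.re
  · refine ⟨normMat 1 (-q.re) 0 1 (by ring), re_smul_zero _ _ _ _ _ _ (by ring),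
      re_smul_zero _ _ _ _ _ _ (by rw [← hre]; ring)⟩
  · set c := ((r.re ^ 2 + r.im ^ 2) - (q.re ^ 2 + q.im ^ 2)) / (2 * (r.re - q.re)) with hcdef
    have hne : r.re - q.re ≠ 0 := sub_ne_zero.2 (Ne.symm hre)
    have hc : (q.re - c) ^ 2 + q.im ^ 2 = (r.re - c) ^ 2 + r.im ^ 2 := by
      rw [hcdef]; field_simp; ring
    have hpos : 0 < (q.re - c) ^ 2 + q.im ^ 2 :=
      add_pos_of_nonneg_of_pos (sq_nonneg _) (by positivity)
    set R := Real.sqrt ((q.re - c) ^ 2 + q.im ^ 2) with hRdef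
    have hR : 0 < R := Real.sqrt_pos.2 hpos
    have hzq : (q.re - c) ^ 2 + q.im ^ 2 = R ^ 2 := (Real.sq_sqrt hpos.le).symm
    have hzr : (r.re - c) ^ 2 + r.im ^ 2 = R ^ 2 := by rw [← hc]; exact hzq
    set s := (Real.sqrt (2 * R))⁻¹ with hsdef
    have hs2 : s ^ 2 = (2 * R)⁻¹ := by
      rw [hsdef, ← Real.sqrt_inv, Real.sq_sqrt (by positivity)]
    have hdet : s * (-s * (c - R)) - (-s * (c + R)) * s = 1 := by
      have : s ^ 2 * (2 * R) = 1 := by rw [hs2]; field_simp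
      linear_combination this
    refine ⟨normMat s (-s * (c + R)) s (-s * (c - R)) hdet,
      re_smul_zero _ _ _ _ _ _ (by linear_combination (s ^ 2) * hzq),
      re_smul_zero _ _ _ _ _ _ (by linear_combination (s ^ 2) * hzr)⟩

lemma mem_geodLine_smul (g : SL(2, ℝ)) (q r x : ℍ) :
    (g • x) ∈ geodLine (g • q) (g • r) ↔ x ∈ geodLine q r := by
  simp only [geodLine, Set.mem_setOf_eq, dist_smul]

lemma geodLine_smul (g : SL(2, ℝ)) (q r : ℍ) :
    geodLine (g • q) (g • r) = (g • ·) '' geodLine q r := by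
  ext x
  constructor
  · intro hx
    refine ⟨g⁻¹ • x, ?_, smul_inv_smul g x⟩
    rw [← mem_geodLine_smul g q r (g⁻¹ • x), smul_inv_smul]
    exact hx
  · rintro ⟨y, hy, rfl⟩
    exact (mem_geodLine_smul g q r y).2 hy

lemma main_sq (p q r : ℍ) (hqr : q ≠ r) :
    (Real.sinh (Metric.infDist p (geodLine q r)) * Real.sinh (dist q r)) ^ 2 =
      1 - Real.cosh (dist p q) ^ 2 - Real.cosh (dist p r) ^ 2 - Real.cosh (dist q r) ^ 2 +
        2 * Real.cosh (dist p q) * Real.cosh (dist p r) * Real.cosh (dist q r) := by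
  obtain ⟨g, hgq, hgr⟩ := exists_normalize q r
  have h1 : Metric.infDist p (geodLine q r)
      = Metric.infDist (g • p) (geodLine (g • q) (g • r)) := by
    rw [geodLine_smul, Metric.infDist_image (isometry_smul ℍ g)]
  have e1 : dist q r = dist (g • q) (g • r) := (dist_smul g q r).symm
  have e2 : dist p q = dist (g • p) (g • q) := (dist_smul g p q).symm
  have e3 : dist p r = dist (g • p) (g • r) := (dist_smul g p r).symm
  rw [h1, e1, e2, e3]
  exact axis_main (g • p) (g • q) (g • r) hgq hgr ((MulAction.injective g).ne hqr)

/-- Distance-only form of the hyperbolic law of sines: the hyperbolic sine of the altitude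
from `p` over the side `qr` times the hyperbolic sine of `dist q r` equals the hyperbolic
sine of the altitude from `r` over the side `pq` times the hyperbolic sine of `dist p q`. -/
theorem hyperbolic_law_of_sines (p q r : ℍ) (hqr : q ≠ r) (hpq : p ≠ q) :
    Real.sinh (Metric.infDist p (geodLine q r)) * Real.sinh (dist q r) =
      Real.sinh (Metric.infDist r (geodLine p q)) * Real.sinh (dist p q) := by
  have h1 := main_sq p q r hqr
  have h2 := main_sq r p q hpq
  have n1 : 0 ≤ Real.sinh (Metric.infDist p (geodLine q r)) * Real.sinh (dist q r) :=
    mul_nonneg (Real.sinh_nonneg_iff.2 Metric.infDist_nonneg)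
      (Real.sinh_nonneg_iff.2 dist_nonneg)
  have n2 : 0 ≤ Real.sinh (Metric.infDist r (geodLine p q)) * Real.sinh (dist p q) :=
    mul_nonneg (Real.sinh_nonneg_iff.2 Metric.infDist_nonneg)
      (Real.sinh_nonneg_iff.2 dist_nonneg)
  rw [← Real.sqrt_sq n1, ← Real.sqrt_sq n2, h1, h2, dist_comm r p, dist_comm r q]
  congr 1
  ring
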